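/- Define arccosh(u) := 2·log(√((u−1)/2) + √((u+1)/2)) using principal square roots and logarithm. Then for every real c < −1 and for u = c (a real point on the branch cut), arccosh(c) = log(−c + √(c²−1)) + π·i, where the square root and logarithm on the right are of positive real numbers. -/

import Mathlib

open Complex Real

lemma neg_real_cpow_half {x : ℝ} (hx : 0 < x) :
    ((-x : ℝ) : ℂ) ^ ((1 / 2 : ℂ)) = (Real.sqrt x : ℂ) * Complex.I := by
  have hne : ((-x : ℝ) : ℂ) ≠ 0 := by
    simp [Complex.ofReal_ne_zero]; linarith
  have hlog : Complex.log ((-x : ℝ) : ℂ) = (Real.log x : ℂ) + π * Complex.I := by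
    rw [Complex.log]
    have h1 : ‖((-x : ℝ) : ℂ)‖ = x := by
      rw [Complex.norm_real, Real.norm_eq_abs, abs_of_neg (by linarith)]; ring
    have h2 : Complex.arg ((-x : ℝ) : ℂ) = π := Complex.arg_ofReal_of_neg (by linarith)
    rw [h1, h2]
  rw [Complex.cpow_def_of_ne_zero hne, hlog]
  have : (1 / 2 : ℂ) * ((Real.log x : ℂ) + π * Complex.I)
      = (Real.log x / 2 : ℝ) + (π / 2 : ℝ) * Complex.I := by
    push_cast; ring
  rw [mul_comm, this, Complex.exp_add, Complex.exp_mul_I]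
  rw [← Complex.ofReal_cos, ← Complex.ofReal_sin, Real.cos_pi_div_two, Real.sin_pi_div_two,
    ← Complex.ofReal_exp]
  have : Real.exp (Real.log x / 2) = Real.sqrt x := by
    rw [show Real.log x / 2 = Real.log x * (1/2) by ring, Real.exp_mul, Real.exp_log hx,
      ← Real.sqrt_eq_rpow]
  rw [this]
  simp

theorem arccosh_on_cut (c : ℝ) (hc : c < -1) :
    2 * Complex.log ((((c : ℂ) - 1) / 2) ^ ((1 / 2 : ℂ)) +
        (((c : ℂ) + 1) / 2) ^ ((1 / 2 : ℂ))) =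
      ((Real.log (-c + Real.sqrt (c ^ 2 - 1)) : ℝ) : ℂ) + (π : ℂ) * Complex.I := by
  have ha : (0:ℝ) < (1 - c)/2 := by linarith
  have hb : (0:ℝ) < (-1 - c)/2 := by linarith
  have e1 : (((c : ℂ) - 1) / 2) = ((-( (1 - c)/2 ) : ℝ) : ℂ) := by push_cast; ring
  have e2 : (((c : ℂ) + 1) / 2) = ((-( (-1 - c)/2 ) : ℝ) : ℂ) := by push_cast; ring
  rw [e1, e2, neg_real_cpow_half ha, neg_real_cpow_half hb]
  set r : ℝ := Real.sqrt ((1 - c)/2) + Real.sqrt ((-1 - c)/2) with hr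
  have hrpos : 0 < r := by positivity
  have hsum : (Real.sqrt ((1 - c)/2) : ℂ) * Complex.I + (Real.sqrt ((-1 - c)/2) : ℂ) * Complex.I
      = (r : ℂ) * Complex.I := by rw [hr]; push_cast; ring
  rw [hsum]
  have hlog : Complex.log ((r : ℂ) * Complex.I)
      = (Real.log r : ℂ) + (π / 2 : ℝ) * Complex.I := by
    rw [Complex.log]
    have h1 : ‖(r : ℂ) * Complex.I‖ = r := by
      simp [Complex.norm_real, abs_of_pos hrpos]
    have h2 : Complex.arg ((r : ℂ) * Complex.I) = π / 2 := by
      rw [Complex.arg_real_mul _ hrpos, Complex.arg_I]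
    rw [h1, h2]
  rw [hlog]
  have hr2 : r ^ 2 = -c + Real.sqrt (c ^ 2 - 1) := by
    have h4 : Real.sqrt ((1 - c)/2) * Real.sqrt ((-1 - c)/2)
        = Real.sqrt (((1 - c)/2) * ((-1 - c)/2)) := (Real.sqrt_mul ha.le _).symm
    have h5 : ((1 - c)/2) * ((-1 - c)/2) = (c ^ 2 - 1) / 4 := by ring
    have hc2 : (0:ℝ) ≤ c ^ 2 - 1 := by nlinarith
    have h6 : Real.sqrt ((c ^ 2 - 1) / 4) = Real.sqrt (c ^ 2 - 1) / 2 := by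
      rw [Real.sqrt_div hc2, show Real.sqrt 4 = 2 by
        rw [show (4:ℝ) = 2 ^ 2 by norm_num, Real.sqrt_sq (by norm_num)]]
    have hsq1 := Real.sq_sqrt ha.le
    have hsq2 := Real.sq_sqrt hb.le
    have expand : r ^ 2 = Real.sqrt ((1 - c)/2) ^ 2 + 2 * (Real.sqrt ((1 - c)/2) * Real.sqrt ((-1 - c)/2)) + Real.sqrt ((-1 - c)/2) ^ 2 := by rw [hr]; ring
    rw [expand, hsq1, hsq2, h4, h5, h6]
    ring
  have hlogr : Real.log (-c + Real.sqrt (c ^ 2 - 1)) = 2 * Real.log r := by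
    rw [← hr2, Real.log_pow]; push_cast; ring
  rw [hlogr]; push_cast; ring
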